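/- Mixed-strategy Nash equilibria of the base game are not necessarily preserved under coarse-graining: there exist a two-player finite normal-form game with payoffs u, a coarse-grained partition 𝔊 of ℝ with a coarse map f for 𝔊, and a mixed-strategy profile σ such that σ is a mixed Nash equilibrium of the base game with payoffs u but σ is not a mixed Nash equilibrium of the transformed game with payoffs i ↦ f ∘ (u i). -/

import Mathlib

/-- A coarse-grained partition of ℝ: a family of pairwise disjoint, nonempty,
order-connected subsets of ℝ whose union is all of ℝ. -/
structure IsCGPartition (𝔊 : Set (Set ℝ)) : Prop where
  nonempty : ∀ G ∈ 𝔊, G.Nonempty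
  ordConnected : ∀ G ∈ 𝔊, G.OrdConnected
  pairwiseDisjoint : ∀ G ∈ 𝔊, ∀ G' ∈ 𝔊, G ≠ G' → Disjoint G G'
  covers : ⋃₀ 𝔊 = Set.univ

/-- A coarse map for a coarse-grained partition `𝔊`: `f x` lies in the block
containing `x`, and `f` is constant on each block. -/
structure IsCoarseMap (𝔊 : Set (Set ℝ)) (f : ℝ → ℝ) : Prop where
  mem_block : ∀ x : ℝ, ∀ G ∈ 𝔊, x ∈ G → f x ∈ G
  const_on_block : ∀ x y : ℝ, ∀ G ∈ 𝔊, x ∈ G → y ∈ G → f x = f y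

/-- A mixed strategy on a finite strategy type: nonnegative weights summing to 1. -/
def IsMixedStrategy {A : Type*} [Fintype A] (σ : A → ℝ) : Prop :=
  (∀ a : A, 0 ≤ σ a) ∧ ∑ a : A, σ a = 1

/-- Expected payoff of player `i` under the mixed-strategy profile `σ`. -/
def expectedPayoff {ι : Type*} [Fintype ι] [DecidableEq ι]
    {S : ι → Type*} [∀ i, Fintype (S i)]
    (u : ι → (∀ i, S i) → ℝ) (σ : ∀ i, S i → ℝ) (i : ι) : ℝ :=
  ∑ s : ∀ j, S j, (∏ j : ι, σ j (s j)) * u i s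

/-- A mixed-strategy profile `σ` is a mixed Nash equilibrium if every component
is a mixed strategy and no player can improve their expected payoff by
unilaterally switching to another mixed strategy. -/
def IsMixedNash {ι : Type*} [Fintype ι] [DecidableEq ι]
    {S : ι → Type*} [∀ i, Fintype (S i)]
    (u : ι → (∀ i, S i) → ℝ) (σ : ∀ i, S i → ℝ) : Prop :=
  (∀ i : ι, IsMixedStrategy (σ i)) ∧
  ∀ i : ι, ∀ τ : S i → ℝ, IsMixedStrategy τ →
    expectedPayoff u (Function.update σ i τ) i ≤ expectedPayoff u σ i

/-- mixed-strategy Nash equilibria of the base game are not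
necessarily preserved under coarse-graining: there is a two-player finite
normal-form game, a coarse-grained partition with a coarse map `f`, and a
mixed profile `σ` that is a mixed Nash equilibrium of the base game but not of
the transformed game with payoffs `i ↦ f ∘ u i`. -/
lemma sum_pi_fin_two (σ : Fin 2 → Fin 2 → ℝ) (g : (Fin 2 → Fin 2) → ℝ) :
    ∑ s : Fin 2 → Fin 2, (∏ j : Fin 2, σ j (s j)) * g s =
      σ 0 0 * σ 1 0 * g ![0,0] + σ 0 0 * σ 1 1 * g ![0,1] +
      σ 0 1 * σ 1 0 * g ![1,0] + σ 0 1 * σ 1 1 * g ![1,1] := by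
  have h : (finZeroElim : Fin 0 → Fin 2) = ![] := funext (fun x => x.elim0)
  rw [← (piFinTwoEquiv fun _ => Fin 2).symm.sum_comp]
  simp [Fintype.sum_prod_type, Fin.sum_univ_two, Fin.prod_univ_two, piFinTwoEquiv, h]
  ring

lemma ep_eq (u : Fin 2 → (Fin 2 → Fin 2) → ℝ) (σ : Fin 2 → Fin 2 → ℝ) (i : Fin 2) :
    expectedPayoff u σ i =
      σ 0 0 * σ 1 0 * u i ![0,0] + σ 0 0 * σ 1 1 * u i ![0,1] +
      σ 0 1 * σ 1 0 * u i ![1,0] + σ 0 1 * σ 1 1 * u i ![1,1] := by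
  rw [expectedPayoff, sum_pi_fin_two σ (u i)]

theorem mixedNash_not_preserved' :
    ∃ (S : Fin 2 → Type) (instS : ∀ i, Fintype (S i)) (_ : ∀ i, Nonempty (S i))
      (u : Fin 2 → (∀ i, S i) → ℝ) (𝔊 : Set (Set ℝ)) (f : ℝ → ℝ)
      (σ : ∀ i, S i → ℝ),
      IsCGPartition 𝔊 ∧ IsCoarseMap 𝔊 f ∧
      (@IsMixedNash (Fin 2) _ _ S instS u σ) ∧
      ¬ (@IsMixedNash (Fin 2) _ _ S instS (fun i => f ∘ u i) σ) := by
  refine ⟨fun _ => Fin 2, fun _ => inferInstance, fun _ => ⟨0⟩,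
    fun i s => if i = 0 then (if s 0 = 0 then (if s 1 = 0 then 1 else -1) else 0) else 0,
    {Set.Iio 0, Set.Ici 0}, fun x => if x < 0 then -1 else 0,
    fun i a => if i = 0 then (if a = 0 then 1 else 0) else 1/2, ?_, ?_, ?_, ?_⟩
  · constructor
    · rintro G (rfl | rfl)
      · exact ⟨-1, by norm_num⟩
      · exact ⟨0, Set.self_mem_Ici⟩
    · rintro G (rfl | rfl)
      · exact Set.ordConnected_Iio
      · exact Set.ordConnected_Ici
    · rintro G (rfl | rfl) G' (rfl | rfl) hne
      · exact absurd rfl hne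
      · exact Set.Iio_disjoint_Ici (le_refl 0)
      · exact (Set.Iio_disjoint_Ici (le_refl 0)).symm
      · exact absurd rfl hne
    · rw [Set.sUnion_pair, Set.Iio_union_Ici]
  · constructor
    · rintro x G (rfl | rfl) hx
      · simp only [Set.mem_Iio] at hx ⊢; rw [if_pos hx]; norm_num
      · simp only [Set.mem_Ici] at hx ⊢; rw [if_neg (not_lt.2 hx)]
    · rintro x y G (rfl | rfl) hx hy
      · simp only [Set.mem_Iio] at hx hy; rw [if_pos hx, if_pos hy]
      · simp only [Set.mem_Ici] at hx hy; rw [if_neg (not_lt.2 hx), if_neg (not_lt.2 hy)]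
  · constructor
    · intro i
      fin_cases i
      · exact ⟨fun a => by fin_cases a <;> norm_num, by rw [Fin.sum_univ_two]; norm_num⟩
      · exact ⟨fun a => by norm_num, by rw [Fin.sum_univ_two]; norm_num⟩
    · intro i τ hτ
      fin_cases i
      · show expectedPayoff _ _ 0 ≤ expectedPayoff _ _ 0
        rw [ep_eq, ep_eq]
        simp [Function.update]
      · show expectedPayoff _ _ 1 ≤ expectedPayoff _ _ 1
        rw [ep_eq, ep_eq]
        norm_num
  · rintro ⟨-, h2⟩
    have := h2 0 (fun a => if a = 1 then 1 else 0)
      ⟨fun a => by fin_cases a <;> norm_num, by rw [Fin.sum_univ_two]; norm_num⟩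
    rw [ep_eq, ep_eq] at this
    simp [Function.update] at this
    norm_num at this


theorem mixedNash_not_preserved :
    ∃ (S : Fin 2 → Type) (instS : ∀ i, Fintype (S i)) (_ : ∀ i, Nonempty (S i))
      (u : Fin 2 → (∀ i, S i) → ℝ) (𝔊 : Set (Set ℝ)) (f : ℝ → ℝ)
      (σ : ∀ i, S i → ℝ),
      IsCGPartition 𝔊 ∧ IsCoarseMap 𝔊 f ∧
      (@IsMixedNash (Fin 2) _ _ S instS u σ) ∧
      ¬ (@IsMixedNash (Fin 2) _ _ S instS (fun i => f ∘ u i) σ) := by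
  exact mixedNash_not_preserved'
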